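/- For every integer n ≥ 2, the largest real root μ_n of the polynomial μ ↦ det_{1≤i,j≤n}(1 + (−1)^{i+j} − δ_{i,j}·2μ/(2i+1)) is μ_n = n(n+3)/2 if n is even, and μ_n = n(n+3)/2 + 1 if n is odd. -/

import Mathlib

open Finset

/-- The matrix in question. -/
noncomputable def Amat (n : ℕ) (x : ℝ) : Matrix (Fin n) (Fin n) ℝ :=
  Matrix.of (fun i j : Fin n =>
    1 + (-1 : ℝ) ^ (((i : ℕ) + 1) + ((j : ℕ) + 1)) -
      (if i = j then 2 * x / (2 * ((i : ℕ) + 1 : ℝ) + 1) else 0))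

/-- Sum of weights over the even class. -/
noncomputable def Ssum1 (n : ℕ) : ℝ := ∑ i : Fin n, if Even (i : ℕ) then 2 * (i : ℝ) + 3 else 0

/-- Sum of weights over the odd class. -/
noncomputable def Ssum2 (n : ℕ) : ℝ := ∑ i : Fin n, if Even (i : ℕ) then 0 else 2 * (i : ℝ) + 3

lemma entry_eq (n : ℕ) (x : ℝ) (i j : Fin n) :
    Amat n x i j = (if (Even (i : ℕ) ↔ Even (j : ℕ)) then (2 : ℝ) else 0) -
      (if i = j then 2 * x / (2 * (i : ℝ) + 3) else 0) := by
  simp only [Amat, Matrix.of_apply]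
  have hw : (2 * ((i : ℕ) + 1 : ℝ) + 1) = 2 * (i : ℝ) + 3 := by push_cast; ring
  rw [hw]
  have hpow : (-1 : ℝ) ^ (((i : ℕ) + 1) + ((j : ℕ) + 1)) = (-1 : ℝ) ^ ((i : ℕ) + (j : ℕ)) := by
    rw [show ((i : ℕ) + 1) + ((j : ℕ) + 1) = (i : ℕ) + (j : ℕ) + 2 by omega, pow_add]
    norm_num
  rw [hpow]
  by_cases h : Even ((i : ℕ) + (j : ℕ))
  · rw [h.neg_one_pow, if_pos (Nat.even_add.mp h)]; norm_num
  · rw [(Nat.not_even_iff_odd.mp h).neg_one_pow,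
      if_neg (fun hc => h (Nat.even_add.mpr hc))]
    norm_num

lemma row_sum (n : ℕ) (x : ℝ) (v : Fin n → ℝ) (i : Fin n) :
    (Amat n x).mulVec v i =
      2 * (if Even (i : ℕ) then (∑ j : Fin n, if Even (j : ℕ) then v j else 0)
           else (∑ j : Fin n, if Even (j : ℕ) then 0 else v j)) -
        2 * x / (2 * (i : ℝ) + 3) * v i := by
  simp only [Matrix.mulVec, dotProduct, entry_eq, sub_mul, Finset.sum_sub_distrib,
    ite_mul, zero_mul]
  congr 1
  · by_cases hi : Even (i : ℕ)
    · simp [hi, Finset.mul_sum, mul_ite]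
    · simp only [hi, if_false, Finset.mul_sum, mul_ite, mul_zero]
      refine Finset.sum_congr rfl fun j _ => ?_
      by_cases hj : Even (j : ℕ) <;> simp [hj, hi]
  · rw [Finset.sum_ite_eq]
    simp

lemma wpos (n : ℕ) (i : Fin n) : (0 : ℝ) < 2 * (i : ℝ) + 3 := by positivity

/-- Classification of roots. -/
lemma classify (n : ℕ) (x : ℝ) (hx0 : x ≠ 0) (h1 : x ≠ Ssum1 n) (h2 : x ≠ Ssum2 n) :
    (Amat n x).det ≠ 0 := by
  intro hdet
  obtain ⟨v, hv0, hv⟩ := Matrix.exists_mulVec_eq_zero_iff.mpr hdet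
  set T1 : ℝ := ∑ j : Fin n, if Even (j : ℕ) then v j else 0 with hT1def
  set T2 : ℝ := ∑ j : Fin n, if Even (j : ℕ) then 0 else v j with hT2def
  have key : ∀ i : Fin n, x * v i = (2 * (i : ℝ) + 3) *
      (if Even (i : ℕ) then T1 else T2) := by
    intro i
    have h := congrFun hv i
    rw [row_sum, ← hT1def, ← hT2def, Pi.zero_apply] at h
    have hw := (wpos n i).ne'
    by_cases hi : Even (i : ℕ) <;> simp only [hi, if_true, if_false] at h ⊢ <;>
      field_simp at h <;> linarith
  have hsum1 : x * T1 = Ssum1 n * T1 := by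
    rw [hT1def, Finset.mul_sum, Ssum1, Finset.sum_mul]
    refine Finset.sum_congr rfl fun i _ => ?_
    by_cases hi : Even (i : ℕ)
    · simp only [hi, if_true, mul_ite, mul_zero]
      rw [key i]; simp [hi, hT1def]
    · simp [hi]
  have hsum2 : x * T2 = Ssum2 n * T2 := by
    rw [hT2def, Finset.mul_sum, Ssum2, Finset.sum_mul]
    refine Finset.sum_congr rfl fun i _ => ?_
    by_cases hi : Even (i : ℕ)
    · simp [hi]
    · simp only [hi, if_false, mul_ite, mul_zero]
      rw [key i]; simp [hi, hT2def]
  have hT1 : T1 = 0 := by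
    by_contra h
    exact h1 (by have := mul_right_cancel₀ h (by linarith [hsum1] : x * T1 = Ssum1 n * T1); linarith [this])
  have hT2 : T2 = 0 := by
    by_contra h
    exact h2 (mul_right_cancel₀ h hsum2)
  apply hv0
  funext i
  have := key i
  rw [hT1, hT2] at this
  rw [ite_self, mul_zero] at this
  exact (mul_eq_zero.mp this).resolve_left hx0


lemma Ssum1_succ (n : ℕ) :
    Ssum1 (n + 1) = Ssum1 n + (if Even n then 2 * (n : ℝ) + 3 else 0) := by
  simp only [Ssum1, Fin.sum_univ_castSucc, Fin.coe_castSucc, Fin.val_last]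

lemma Ssum2_succ (n : ℕ) :
    Ssum2 (n + 1) = Ssum2 n + (if Even n then 0 else 2 * (n : ℝ) + 3) := by
  simp only [Ssum2, Fin.sum_univ_castSucc, Fin.coe_castSucc, Fin.val_last]

lemma Ssum1_eq (n : ℕ) : Ssum1 n =
    if Even n then (n : ℝ) * ((n : ℝ) + 1) / 2 else ((n : ℝ) + 1) * ((n : ℝ) + 2) / 2 := by
  induction n with
  | zero => simp [Ssum1]
  | succ n ih =>
    rw [Ssum1_succ, ih]
    by_cases hn : Even n
    · rw [if_pos hn, if_pos hn, if_neg (by simpa [Nat.even_add_one] using hn)]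
      push_cast; ring
    · rw [if_neg hn, if_neg hn, if_pos (Nat.even_add_one.mpr hn)]
      push_cast; ring

lemma Ssum2_eq (n : ℕ) : Ssum2 n =
    if Even n then (n : ℝ) * ((n : ℝ) + 3) / 2 else ((n : ℝ) - 1) * ((n : ℝ) + 2) / 2 := by
  induction n with
  | zero => simp [Ssum2]
  | succ n ih =>
    rw [Ssum2_succ, ih]
    by_cases hn : Even n
    · rw [if_pos hn, if_pos hn, if_neg (by simpa [Nat.even_add_one] using hn)]
      push_cast; ring
    · rw [if_neg hn, if_neg hn, if_pos (Nat.even_add_one.mpr hn)]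
      push_cast; ring

/-- `Ssum1 n` is a root (when the even class is nonempty). -/
lemma root1 (n : ℕ) (hn : 1 ≤ n) : (Amat n (Ssum1 n)).det = 0 := by
  rw [← Matrix.exists_mulVec_eq_zero_iff]
  refine ⟨fun i => if Even (i : ℕ) then 2 * (i : ℝ) + 3 else 0, ?_, ?_⟩
  · intro h
    have := congrFun h ⟨0, hn⟩
    norm_num at this
  · funext i
    rw [row_sum]
    have hw := (wpos n i).ne'
    by_cases hi : Even (i : ℕ)
    · simp only [hi, if_true, Pi.zero_apply]
      have h1 : (∑ j : Fin n, if Even (j : ℕ)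
          then (if Even (j : ℕ) then 2 * (j : ℝ) + 3 else 0) else 0) = Ssum1 n := by
        rw [Ssum1]; exact Finset.sum_congr rfl fun j _ => by by_cases hj : Even (j:ℕ) <;> simp [hj]
      rw [h1]
      field_simp
      ring
    · simp only [hi, if_false, Pi.zero_apply]
      have h1 : (∑ j : Fin n, if Even (j : ℕ) then 0
          else (if Even (j : ℕ) then 2 * (j : ℝ) + 3 else 0)) = 0 := by
        refine Finset.sum_eq_zero fun j _ => by by_cases hj : Even (j:ℕ) <;> simp [hj]
      rw [h1]
      ring

/-- `Ssum2 n` is a root (when the odd class is nonempty). -/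
lemma root2 (n : ℕ) (hn : 2 ≤ n) : (Amat n (Ssum2 n)).det = 0 := by
  rw [← Matrix.exists_mulVec_eq_zero_iff]
  refine ⟨fun i => if Even (i : ℕ) then 0 else 2 * (i : ℝ) + 3, ?_, ?_⟩
  · intro h
    have := congrFun h ⟨1, hn⟩
    norm_num [Nat.even_iff] at this
  · funext i
    rw [row_sum]
    have hw := (wpos n i).ne'
    by_cases hi : Even (i : ℕ)
    · simp only [hi, if_true, Pi.zero_apply]
      have h1 : (∑ j : Fin n, if Even (j : ℕ)
          then (if Even (j : ℕ) then 0 else 2 * (j : ℝ) + 3) else 0) = 0 := by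
        refine Finset.sum_eq_zero fun j _ => by by_cases hj : Even (j:ℕ) <;> simp [hj]
      rw [h1]
      ring
    · simp only [hi, if_false, Pi.zero_apply]
      have h1 : (∑ j : Fin n, if Even (j : ℕ) then 0
          else (if Even (j : ℕ) then 0 else 2 * (j : ℝ) + 3)) = Ssum2 n := by
        rw [Ssum2]; exact Finset.sum_congr rfl fun j _ => by by_cases hj : Even (j:ℕ) <;> simp [hj]
      rw [h1]
      field_simp
      ring


/-- For `n ≥ 2`, the largest real root `μ_n` of the polynomial
`μ ↦ det_{1≤i,j≤n}(1 + (−1)^{i+j} − δ_{i,j} 2μ/(2i+1))` equals `n(n+3)/2` if `n` is even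
and `n(n+3)/2 + 1` if `n` is odd. -/
theorem maxroot_det_C (n : ℕ) (hn : 2 ≤ n) (mu : ℝ)
    (hmu : IsGreatest {x : ℝ |
      Matrix.det (Matrix.of (fun i j : Fin n =>
        1 + (-1 : ℝ) ^ (((i : ℕ) + 1) + ((j : ℕ) + 1)) -
          (if i = j then 2 * x / (2 * ((i : ℕ) + 1 : ℝ) + 1) else 0))) = 0} mu) :
    mu = if Even n then (n : ℝ) * ((n : ℝ) + 3) / 2
         else (n : ℝ) * ((n : ℝ) + 3) / 2 + 1 := by
  obtain ⟨hmem, hub⟩ := hmu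
  have hdet : (Amat n mu).det = 0 := hmem
  have hn2 : (2 : ℝ) ≤ (n : ℝ) := by exact_mod_cast hn
  set r : ℝ := if Even n then Ssum2 n else Ssum1 n with hr
  have hrS : (Amat n r).det = 0 := by
    by_cases h : Even n
    · rw [hr, if_pos h]; exact root2 n hn
    · rw [hr, if_neg h]; exact root1 n (le_trans one_le_two hn)
  have hrle : r ≤ mu := hub hrS
  have hle : mu ≤ r := by
    have hclass : mu = 0 ∨ mu = Ssum1 n ∨ mu = Ssum2 n := by
      by_contra hc
      push_neg at hc
      exact classify n mu hc.1 hc.2.1 hc.2.2 hdet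
    have e1 := Ssum1_eq n
    have e2 := Ssum2_eq n
    by_cases h : Even n
    · rw [hr, if_pos h]
      rw [if_pos h] at e1 e2
      rcases hclass with h0 | h1 | h2
      · rw [h0, e2]; nlinarith
      · rw [h1, e1, e2]; nlinarith
      · rw [h2]
    · rw [hr, if_neg h]
      rw [if_neg h] at e1 e2
      rcases hclass with h0 | h1 | h2
      · rw [h0, e1]; nlinarith
      · rw [h1]
      · rw [h2, e1, e2]; nlinarith
  have hmur : mu = r := le_antisymm hle hrle
  rw [hmur, hr]
  by_cases h : Even n
  · rw [if_pos h, if_pos h, Ssum2_eq, if_pos h]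
  · rw [if_neg h, if_neg h, Ssum1_eq, if_neg h]; ring
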